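/- The only positive integer solutions (n, l, k) with l ≥ 3 to the equation F_n = F_l^k * (F_l - 1) are (n, l, k) = (3, 3, 1) and (6, 3, 3). -/

import Mathlib

open Nat Finset

section FibAux
set_option maxHeartbeats 1000000

abbrev Amat : Matrix (Fin 2) (Fin 2) ℕ := !![1,1;1,0]

lemma Amat_pow (i : ℕ) : Amat ^ (i+1) = !![fib (i+2), fib (i+1); fib (i+1), fib i] := by
  induction i with
  | zero => simp [pow_succ]
  | succ i ih =>
    rw [pow_succ, ih]
    rw [show Amat = !![1,1;1,0] from rfl, Matrix.mul_fin_two]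
    congr 1 <;> simp [fib_add_two] <;> ring_nf <;> simp

lemma Amat_pow_01 (i : ℕ) : (Amat ^ i) 0 1 = fib i := by
  cases i with
  | zero => simp
  | succ i => rw [Amat_pow]; simp

lemma Amat_decomp (l : ℕ) (hl : 1 ≤ l) :
    Amat ^ l = fib l • Amat + fib (l-1) • (1 : Matrix (Fin 2) (Fin 2) ℕ) := by
  obtain ⟨l', rfl⟩ := Nat.exists_eq_add_of_le hl
  rw [show 1 + l' = l' + 1 by ring, Amat_pow]
  rw [Matrix.one_fin_two]
  ext i j
  fin_cases i <;> fin_cases j <;>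
    simp [Matrix.smul_apply, fib_add_two] <;> ring

lemma smul_helper (x y c : ℕ) (M : Matrix (Fin 2) (Fin 2) ℕ) :
    (x • M) * (y • (1 : Matrix (Fin 2) (Fin 2) ℕ)) * ((c:ℕ) : Matrix (Fin 2) (Fin 2) ℕ)
      = (x * y * c) • M := by
  have hc : ((c:ℕ) : Matrix (Fin 2) (Fin 2) ℕ) = c • (1 : Matrix (Fin 2) (Fin 2) ℕ) := by
    rw [nsmul_eq_mul, mul_one]
  rw [hc, smul_mul_assoc, smul_mul_assoc, mul_smul_comm, mul_smul_comm, mul_one, mul_one,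
    smul_smul, smul_smul]
  congr 1
  ring

lemma fib_mul_eq_sum (l m : ℕ) (hl : 1 ≤ l) :
    fib (l * m) = ∑ i ∈ range (m+1),
      fib l ^ i * fib (l-1) ^ (m-i) * m.choose i * fib i := by
  have h1 : fib (l * m) = (Amat ^ (l*m)) 0 1 := (Amat_pow_01 _).symm
  rw [h1, pow_mul, Amat_decomp l hl]
  have hc : Commute (fib l • Amat) (fib (l-1) • (1 : Matrix (Fin 2) (Fin 2) ℕ)) := by
    apply Commute.smul_left
    apply Commute.smul_right
    exact Commute.one_right _
  rw [hc.add_pow, Matrix.sum_apply]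
  apply Finset.sum_congr rfl
  intro i hi
  rw [smul_pow, smul_pow, one_pow, smul_helper, Matrix.smul_apply, Amat_pow_01, smul_eq_mul]

lemma three_pow_ge (v : ℕ) (hv : 1 ≤ v) : v + 2 ≤ 3 ^ v := by
  induction v with
  | zero => omega
  | succ v ih =>
    rcases Nat.eq_zero_or_pos v with h | h
    · subst h; norm_num
    · have h1 := ih h
      have h2 : 3 ^ (v+1) = 3 * 3 ^ v := by ring
      omega

lemma binom_dvd (u j i m : ℕ) (hu : ¬ 2 ∣ u) (hm : u ^ j ∣ m) (hi : 2 ≤ i) :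
    u ^ (j+2) ∣ m.choose i * u ^ i := by
  rcases le_or_gt (j+2) i with h | h
  · exact Dvd.dvd.mul_left (pow_dvd_pow u h) _
  rcases le_or_gt i m with him | him
  swap
  · rw [Nat.choose_eq_zero_of_lt him, zero_mul]; exact dvd_zero _
  have hm0 : m ≠ 0 := by omega
  have hu0 : u ≠ 0 := by rintro rfl; exact hu (dvd_zero 2)
  set c := j + 2 - i with hc
  have hci : c + i = j + 2 := by omega
  have hch0 : m.choose i ≠ 0 := Nat.pos_iff_ne_zero.mp (Nat.choose_pos him)
  have key : u ^ c ∣ m.choose i := by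
    rw [← Nat.factorization_le_iff_dvd (pow_ne_zero _ hu0) hch0]
    intro p
    simp only [Nat.factorization_pow, Finsupp.smul_apply, smul_eq_mul]
    set a := u.factorization p with ha
    rcases Nat.eq_zero_or_pos a with ha0 | hap
    · simp [ha0]
    have hp : p.Prime := by
      by_contra hnp
      rw [Nat.factorization_eq_zero_of_not_prime u hnp] at ha
      omega
    have hpu : p ∣ u := dvd_trans (dvd_pow_self p (by omega : a ≠ 0)) (ha ▸ Nat.ordProj_dvd u p)
    have hp2 : p ≠ 2 := by rintro rfl; exact hu hpu
    have hp3 : 3 ≤ p := by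
      have := hp.two_le
      omega
    -- v_p(m) ≥ j * a
    have hvm : j * a ≤ m.factorization p := by
      have := (Nat.factorization_le_iff_dvd (pow_ne_zero _ hu0) hm0).mpr hm p
      simpa [Nat.factorization_pow] using this
    -- identity m * C(m-1, i-1) = C(m,i) * i
    have hid : m * (m-1).choose (i-1) = m.choose i * i := by
      have := Nat.add_one_mul_choose_eq (m-1) (i-1)
      have h1 : m - 1 + 1 = m := by omega
      have h2 : i - 1 + 1 = i := by omega
      rw [h1, h2] at this
      exact this
    have hch0' : (m-1).choose (i-1) ≠ 0 := by
      have : i - 1 ≤ m - 1 := by omega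
      exact Nat.pos_iff_ne_zero.mp (Nat.choose_pos this)
    have hfac : m.factorization p + ((m-1).choose (i-1)).factorization p
        = (m.choose i).factorization p + i.factorization p := by
      have e1 := Nat.factorization_mul hm0 hch0'
      have e2 := Nat.factorization_mul hch0 (by omega : i ≠ 0)
      have := congrArg (fun f => f p) (e1 ▸ e2 ▸ congrArg Nat.factorization hid)
      simpa using this
    -- v_p(i) ≤ (i-2) * a
    have hvi : i.factorization p ≤ (i - 2) * a := by
      set v := i.factorization p with hv
      rcases Nat.eq_zero_or_pos v with hv0 | hvp
      · omega
      have hdvd : p ^ v ∣ i := hv ▸ Nat.ordProj_dvd i p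
      have hle : p ^ v ≤ i := Nat.le_of_dvd (by omega) hdvd
      have h3 : 3 ^ v ≤ p ^ v := Nat.pow_le_pow_left hp3 v
      have h4 := three_pow_ge v hvp
      have : v ≤ i - 2 := by omega
      calc v ≤ (i-2) * 1 := by omega
      _ ≤ (i-2) * a := Nat.mul_le_mul_left _ hap
    have : c * a + (i-2) * a ≤ j * a := by
      have : (c + (i-2)) * a = j * a := by congr 1; omega
      rw [← this, add_mul]
    omega
  calc u ^ (j+2) = u ^ c * u ^ i := by rw [← pow_add, hci]
  _ ∣ m.choose i * u ^ i := mul_dvd_mul key dvd_rfl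

lemma fib_lte (l u w : ℕ) (hl : 1 ≤ l) (hu : ¬ 2 ∣ u) (hP : fib l = u * w)
    (hcw : Nat.Coprime u w) (hcf : Nat.Coprime u (fib (l-1))) :
    ∀ j m, 1 ≤ m → u ^ (j+1) ∣ fib (l * m) → u ^ j ∣ m := by
  intro j
  induction j with
  | zero => intro m _ _; simpa using one_dvd m
  | succ j ih =>
    intro m hm h
    have hj : u ^ j ∣ m := ih m hm (dvd_trans (pow_dvd_pow u (by omega)) h)
    set f : ℕ → ℕ := fun i => fib l ^ i * fib (l-1) ^ (m-i) * m.choose i * fib i with hf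
    have hsum : fib (l * m) = ∑ i ∈ range (m+1), f i := fib_mul_eq_sum l m hl
    have h1mem : (1:ℕ) ∈ range (m+1) := by simp; omega
    have hsplit : f 1 + ∑ i ∈ (range (m+1)).erase 1, f i = ∑ i ∈ range (m+1), f i :=
      Finset.add_sum_erase _ f h1mem
    have hrest : u ^ (j+2) ∣ ∑ i ∈ (range (m+1)).erase 1, f i := by
      apply Finset.dvd_sum
      intro i hi
      rcases Nat.lt_or_ge i 2 with hi2 | hi2
      · interval_cases i
        · simp [hf]
        · simp at hi
      · have hb := binom_dvd u j i m hu hj hi2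
        have : f i = (m.choose i * u ^ i) * (w ^ i * fib (l-1) ^ (m-i) * fib i) := by
          simp only [hf, hP]
          ring
        rw [this]
        exact Dvd.dvd.mul_right hb _
    have hf1 : u ^ (j+2) ∣ f 1 := by
      have htot : u ^ (j+2) ∣ f 1 + ∑ i ∈ (range (m+1)).erase 1, f i := by
        rw [hsplit, ← hsum]
        have : j + 1 + 1 = j + 2 := rfl
        rwa [this] at h
      rw [Nat.add_comm (f 1)] at htot
      exact (Nat.dvd_add_right hrest).mp htot
    have hu0 : u ≠ 0 := by rintro rfl; exact hu (dvd_zero 2)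
    have hf1' : f 1 = u * (w * fib (l-1) ^ (m-1) * m) := by
      simp only [hf, hP]
      simp [Nat.choose_one_right]
      ring
    rw [hf1', show j+2 = 1 + (j+1) by omega, pow_add, pow_one] at hf1
    have hdvd : u ^ (j+1) ∣ w * fib (l-1) ^ (m-1) * m :=
      (Nat.mul_dvd_mul_iff_left (Nat.pos_of_ne_zero hu0)).mp hf1
    have hcop : Nat.Coprime (u ^ (j+1)) (w * fib (l-1) ^ (m-1)) :=
      Nat.Coprime.pow_left _ (Nat.Coprime.mul_right hcw (Nat.Coprime.pow_right _ hcf))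
    exact hcop.dvd_of_dvd_mul_left hdvd

-- size lemma
lemma fib_pow_le (l : ℕ) (hl : 1 ≤ l) : ∀ m, 1 ≤ m → fib l ^ m ≤ fib (l * m) := by
  intro m hm
  induction m with
  | zero => omega
  | succ m ih =>
    rcases Nat.eq_zero_or_pos m with rfl | hm1
    · simp
    have h1 := ih hm1
    have hmul : l * (m+1) = l * m + l := by ring
    have h2 : fib (l * (m+1)) = fib (l*m) * fib (l-1) + fib (l*m+1) * fib l := by
      have e1 : l * (m+1) = l*m + (l-1) + 1 := by omega
      have e2 : l - 1 + 1 = l := by omega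
      rw [e1, Nat.fib_add, e2]
    have h3 : fib (l*m) ≤ fib (l*m+1) := Nat.fib_mono (by omega)
    calc fib l ^ (m+1) = fib l ^ m * fib l := by ring
    _ ≤ fib (l*m) * fib l := Nat.mul_le_mul_right _ h1
    _ ≤ fib (l*m+1) * fib l := Nat.mul_le_mul_right _ h3
    _ ≤ fib (l * (m+1)) := by omega

-- divisibility of index
lemma index_dvd (l n : ℕ) (hl : 3 ≤ l) (h : fib l ∣ fib n) : l ∣ n := by
  set g := Nat.gcd l n with hg
  have hfg : fib g = Nat.gcd (fib l) (fib n) := Nat.fib_gcd l n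
  have h1 : fib l ∣ fib g := hfg ▸ Nat.dvd_gcd dvd_rfl h
  have h2 : fib g ∣ fib l := Nat.fib_dvd g l (Nat.gcd_dvd_left l n)
  have heq : fib g = fib l := Nat.dvd_antisymm h2 h1
  have hgl : g ≤ l := Nat.le_of_dvd (by omega) (Nat.gcd_dvd_left l n)
  rcases Nat.eq_or_lt_of_le hgl with heql | hglt
  · have := Nat.gcd_dvd_right l n
    rwa [← hg, heql] at this
  · exfalso
    have h3 : fib g ≤ fib (l-1) := Nat.fib_mono (by omega)
    have h4 : fib (l-1) < fib l := by
      have := Nat.fib_lt_fib_succ (n := l-1) (by omega)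
      rwa [show l - 1 + 1 = l by omega] at this
    omega

-- fib is a power of two forces small exponent
lemma fib_eq_two_pow_exp_le (x e : ℕ) (h : fib x = 2 ^ e) : e ≤ 3 := by
  by_contra he
  push_neg at he
  set g := Nat.gcd x 12 with hg
  have hfg : fib g = Nat.gcd (fib x) (fib 12) := Nat.fib_gcd x 12
  have h16 : (16:ℕ) ∣ fib g := by
    rw [hfg]
    apply Nat.dvd_gcd
    · rw [h]
      exact pow_dvd_pow 2 (by omega : 4 ≤ e)
    · decide
  have hdvd2 : fib g ∣ 2 ^ e := by
    rw [hfg, ← h]; exact Nat.gcd_dvd_left _ _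
  have hgd : g ∣ 12 := Nat.gcd_dvd_right x 12
  have hgle : g ≤ 12 := Nat.le_of_dvd (by norm_num) hgd
  have hg1 : 1 ≤ g := Nat.pos_of_dvd_of_pos hgd (by norm_num)
  interval_cases g <;>
    first
      | (exact absurd hgd (by decide))
      | (exact absurd h16 (by decide))
      | (have h9 : (9:ℕ) ∣ 2 ^ e := dvd_trans (by decide : (9:ℕ) ∣ fib 12) hdvd2
         have hc : Nat.Coprime 9 (2 ^ e) := Nat.Coprime.pow_right e (by decide)
         have := hc.eq_one_of_dvd h9
         omega)

lemma lt_three_pow_aux : ∀ t : ℕ, t + 2 < 3 ^ (t+1) := by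
  intro t
  induction t with
  | zero => norm_num
  | succ t ih =>
    have h2 : 3 ^ (t + 1 + 1) = 3 * 3 ^ (t + 1) := by ring
    omega

lemma lt_three_pow (k : ℕ) (hk : 2 ≤ k) : k < 3 ^ (k-1) := by
  have := lt_three_pow_aux (k - 2)
  rwa [show k - 2 + 2 = k by omega, show k - 2 + 1 = k - 1 by omega] at this

end FibAux

theorem fib_eq_fib_pow_mul_fib_sub_one (n l k : ℕ)
    (hn : 1 ≤ n) (hl : 3 ≤ l) (hk : 1 ≤ k) :
    Nat.fib n = Nat.fib l ^ k * (Nat.fib l - 1) ↔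
      (n = 3 ∧ l = 3 ∧ k = 1) ∨ (n = 6 ∧ l = 3 ∧ k = 3) := by
  constructor
  swap
  · rintro (⟨rfl, rfl, rfl⟩ | ⟨rfl, rfl, rfl⟩) <;> decide
  intro h
  by_cases hl3 : l = 3
  · -- l = 3 : fib n = 2^k
    subst hl3
    rw [show fib 3 = 2 from rfl] at h
    norm_num at h
    have hk3 : k ≤ 3 := fib_eq_two_pow_exp_le n k h
    have hn6 : n ≤ 6 := by
      by_contra hn7
      push_neg at hn7
      have h13 : (13:ℕ) ≤ fib n := by
        calc (13:ℕ) = fib 7 := by decide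
        _ ≤ fib n := Nat.fib_mono (by omega)
      have h8 : (2:ℕ)^k ≤ 8 := by
        calc (2:ℕ)^k ≤ 2^3 := Nat.pow_le_pow_right (by norm_num) hk3
        _ = 8 := by norm_num
      omega
    interval_cases k <;> interval_cases n <;>
      first
        | (exact absurd h (by decide))
        | (left; exact ⟨rfl, rfl, rfl⟩)
        | (right; exact ⟨rfl, rfl, rfl⟩)
  by_cases hl6 : l = 6
  · -- l = 6 : fib n = 8^k * 7
    exfalso
    subst hl6
    rw [show fib 6 = 8 from rfl] at h
    norm_num at h
    have h7 : (7:ℕ) ∣ fib n := by rw [h]; exact dvd_mul_left 7 _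
    have h8 : (8:ℕ) ∣ fib n := by
      rw [h]; exact dvd_mul_of_dvd_left (dvd_pow_self 8 (by omega : k ≠ 0)) _
    -- 8 ∣ n
    have hn8 : 8 ∣ n := by
      set g := Nat.gcd n 8 with hg
      have hfg : fib g = Nat.gcd (fib n) (fib 8) := Nat.fib_gcd n 8
      have h7g : (7:ℕ) ∣ fib g := hfg ▸ Nat.dvd_gcd h7 (by decide)
      have hgd : g ∣ 8 := Nat.gcd_dvd_right n 8
      have hgle : g ≤ 8 := Nat.le_of_dvd (by norm_num) hgd
      have hg1 : 1 ≤ g := Nat.pos_of_dvd_of_pos hgd (by norm_num)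
      have hge : g = 8 := by
        interval_cases g <;>
          first
            | rfl
            | (exact absurd hgd (by decide))
            | (exact absurd h7g (by decide))
      rw [← hge]; exact hg ▸ Nat.gcd_dvd_left n 8
    have hn6 : 6 ∣ n := by
      set g := Nat.gcd n 6 with hg
      have hfg : fib g = Nat.gcd (fib n) (fib 6) := Nat.fib_gcd n 6
      have h8g : (8:ℕ) ∣ fib g := hfg ▸ Nat.dvd_gcd h8 (by decide)
      have hgd : g ∣ 6 := Nat.gcd_dvd_right n 6
      have hgle : g ≤ 6 := Nat.le_of_dvd (by norm_num) hgd
      have hg1 : 1 ≤ g := Nat.pos_of_dvd_of_pos hgd (by norm_num)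
      have hge : g = 6 := by
        interval_cases g <;>
          first
            | rfl
            | (exact absurd hgd (by decide))
            | (exact absurd h8g (by decide))
      rw [← hge]; exact hg ▸ Nat.gcd_dvd_left n 6
    have h24 : 24 ∣ n := by
      have := Nat.lcm_dvd hn8 hn6
      norm_num at this
      exact this
    have h9 : (9:ℕ) ∣ fib n := dvd_trans (by decide : (9:ℕ) ∣ fib 24) (Nat.fib_dvd 24 n h24)
    rw [h] at h9
    have hc : Nat.Coprime 9 (8 ^ k * 7) :=
      Nat.Coprime.mul_right (Nat.Coprime.pow_right k (by decide)) (by decide)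
    have := hc.eq_one_of_dvd h9
    omega
  · -- general case l ≥ 4, l ≠ 6
    exfalso
    have hl4 : 4 ≤ l := by omega
    have hfl3 : 3 ≤ fib l := by
      calc (3:ℕ) = fib 4 := by decide
      _ ≤ fib l := Nat.fib_mono hl4
    have hfl0 : fib l ≠ 0 := by omega
    have hfldvd : fib l ∣ fib n := by
      rw [h]; exact dvd_mul_of_dvd_left (dvd_pow_self _ (by omega : k ≠ 0)) _
    have hldvd : l ∣ n := index_dvd l n hl hfldvd
    obtain ⟨m, rfl⟩ := hldvd
    have hm1 : 1 ≤ m := by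
      rcases Nat.eq_zero_or_pos m with rfl | h'
      · simp at hn
      · exact h'
    -- m ≤ k
    have hsize : fib l ^ m ≤ fib (l * m) := fib_pow_le l (by omega) m hm1
    have hupper : fib (l * m) < fib l ^ (k+1) := by
      rw [h, pow_succ]
      apply Nat.mul_lt_mul_of_le_of_lt (le_refl _) (by omega)
      positivity
    have hmk : m ≤ k := by
      have : fib l ^ m < fib l ^ (k+1) := lt_of_le_of_lt hsize hupper
      have := (Nat.pow_lt_pow_iff_right (by omega : 1 < fib l)).mp this
      omega
    -- odd part u of fib l
    set e := (fib l).factorization 2 with he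
    set u := fib l / 2 ^ e with hu
    have hPd : 2 ^ e * u = fib l := Nat.ordProj_mul_ordCompl_eq_self (fib l) 2
    have hu2 : ¬ 2 ∣ u := Nat.not_dvd_ordCompl Nat.prime_two hfl0
    have hcw : Nat.Coprime u (2 ^ e) :=
      Nat.Coprime.pow_right e ((Nat.coprime_ordCompl Nat.prime_two hfl0).symm)
    have hu0 : u ≠ 0 := by rintro h0; rw [h0, mul_zero] at hPd; omega
    have hu1 : u ≠ 1 := by
      intro h1
      rw [h1, mul_one] at hPd
      -- fib l = 2^e
      have he3 : e ≤ 3 := fib_eq_two_pow_exp_le l e hPd.symm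
      have hfl8 : fib l ≤ 8 := by
        rw [← hPd]
        calc (2:ℕ)^e ≤ 2^3 := Nat.pow_le_pow_right (by norm_num) he3
        _ = 8 := by norm_num
      have hl7 : l < 7 := by
        by_contra h7
        push_neg at h7
        have : (13:ℕ) ≤ fib l := by
          calc (13:ℕ) = fib 7 := by decide
          _ ≤ fib l := Nat.fib_mono h7
        omega
      interval_cases l
      · rw [show fib 4 = 3 from by decide] at hPd
        interval_cases e <;> omega
      · rw [show fib 5 = 5 from by decide] at hPd
        interval_cases e <;> omega
      · exact hl6 rfl
    have hu3 : 3 ≤ u := by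
      rcases Nat.lt_or_ge u 3 with h' | h'
      · interval_cases u
        · exact absurd rfl hu0
        · exact absurd rfl hu1
        · exact absurd dvd_rfl hu2
      · exact h'
    -- u^k divides fib (l*m)
    have hudvd : u ∣ fib l := Nat.ordCompl_dvd (fib l) 2
    have hukdvd : u ^ k ∣ fib (l * m) := by
      rw [h]
      exact dvd_mul_of_dvd_left (pow_dvd_pow_of_dvd hudvd k) _
    have hcf : Nat.Coprime u (fib (l-1)) := by
      have h1 : Nat.Coprime (fib (l-1)) (fib l) := by
        have := Nat.fib_coprime_fib_succ (l-1)
        rwa [show l - 1 + 1 = l by omega] at this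
      exact Nat.Coprime.coprime_dvd_left hudvd h1.symm
    have hlte : u ^ (k-1) ∣ m := by
      have := fib_lte l u (2^e) (by omega) hu2 (by rw [← hPd]; ring) hcw hcf (k-1) m hm1
      apply this
      rwa [show k - 1 + 1 = k by omega]
    have hmge : u ^ (k-1) ≤ m := Nat.le_of_dvd (by omega) hlte
    have h3k : 3 ^ (k-1) ≤ m := le_trans (Nat.pow_le_pow_left hu3 _) hmge
    rcases Nat.lt_or_ge k 2 with hk2 | hk2
    · -- k = 1, so m ≤ 1, m = 1, n = l
      have hk1 : k = 1 := by omega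
      subst hk1
      have hm : m = 1 := by omega
      subst hm
      rw [mul_one, pow_one] at h
      have : fib l * 2 ≤ fib l * (fib l - 1) := Nat.mul_le_mul_left _ (by omega)
      omega
    · have := lt_three_pow k hk2
      omega
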